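/- Let E be a real Banach space, let p ∈ (1, 2), and set q := p/(p−1). Assume the p-Clarkson inequality holds in the form: for all f, g ∈ E, ‖(f+g)/2‖^q + ‖(f−g)/2‖^q ≤ ((1/2)‖f‖^p + (1/2)‖g‖^p)^{q/p}. Then for every nonempty closed convex subset C ⊆ E there exists a unique element x ∈ C such that ‖x‖^p = inf{‖y‖^p : y ∈ C}. -/

import Mathlib

/-- Let `E` be a real Banach space, `p ∈ (1, 2)`, and `q := p / (p - 1)`. Assume the
`p`-Clarkson inequality holds in the form
`‖(f+g)/2‖^q + ‖(f−g)/2‖^q ≤ ((1/2)‖f‖^p + (1/2)‖g‖^p)^(q/p)`.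
Then every nonempty closed convex subset `C ⊆ E` contains a unique element `x`
with `‖x‖^p = inf {‖y‖^p : y ∈ C}`. -/
theorem exists_unique_norm_pow_minimizer_of_clarkson_lt_two
    (E : Type*) [NormedAddCommGroup E] [NormedSpace ℝ E] [CompleteSpace E]
    (p : ℝ) (hp1 : 1 < p) (hp2 : p < 2)
    (hClarkson : ∀ f g : E,
      ‖(2 : ℝ)⁻¹ • (f + g)‖ ^ (p / (p - 1)) + ‖(2 : ℝ)⁻¹ • (f - g)‖ ^ (p / (p - 1)) ≤
        ((1 / 2) * ‖f‖ ^ p + (1 / 2) * ‖g‖ ^ p) ^ ((p / (p - 1)) / p))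
    (C : Set E) (hne : C.Nonempty) (hclosed : IsClosed C) (hconv : Convex ℝ C) :
    ∃! x : E, x ∈ C ∧ ‖x‖ ^ p = sInf ((fun y => ‖y‖ ^ p) '' C) := by
  set q := p / (p - 1) with hqdef
  have hp0 : 0 < p := by linarith
  have hp1' : 0 < p - 1 := by linarith
  have hq0 : 0 < q := div_pos hp0 hp1'
  have hqp0 : 0 < q / p := div_pos hq0 hp0
  set S := (fun y : E => ‖y‖ ^ p) '' C with hSdef
  have hSne : S.Nonempty := hne.image _
  have hSbdd : BddBelow S := ⟨0, by rintro _ ⟨y, -, rfl⟩; positivity⟩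
  set m := sInf S with hmdef
  have hm0 : 0 ≤ m := Real.sInf_nonneg (by rintro _ ⟨y, -, rfl⟩; positivity)
  have hmle : ∀ y ∈ C, m ≤ ‖y‖ ^ p := fun y hy => csInf_le hSbdd ⟨y, hy, rfl⟩
  -- rewrite (x^p)^(q/p) = x^q
  have hpow : ∀ x : ℝ, 0 ≤ x → (x ^ p) ^ (q / p) = x ^ q := by
    intro x hx
    rw [← Real.rpow_mul hx]
    congr 1
    field_simp
  -- key estimate
  have key : ∀ f ∈ C, ∀ g ∈ C, ‖(2 : ℝ)⁻¹ • (f - g)‖ ^ q ≤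
      ((1 / 2) * ‖f‖ ^ p + (1 / 2) * ‖g‖ ^ p) ^ (q / p) - m ^ (q / p) := by
    intro f hf g hg
    have hmid : (2 : ℝ)⁻¹ • (f + g) ∈ C := by
      have h := hconv hf hg (by norm_num : (0:ℝ) ≤ 2⁻¹) (by norm_num : (0:ℝ) ≤ 2⁻¹)
        (by norm_num)
      simpa [smul_add] using h
    have h1 : m ^ (q / p) ≤ ‖(2 : ℝ)⁻¹ • (f + g)‖ ^ q := by
      calc m ^ (q / p) ≤ (‖(2 : ℝ)⁻¹ • (f + g)‖ ^ p) ^ (q / p) :=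
            Real.rpow_le_rpow hm0 (hmle _ hmid) hqp0.le
        _ = ‖(2 : ℝ)⁻¹ • (f + g)‖ ^ q := hpow _ (norm_nonneg _)
    have h2 := hClarkson f g
    linarith
  -- minimizing sequence
  have hsel : ∀ n : ℕ, ∃ x, x ∈ C ∧ ‖x‖ ^ p < m + 1 / (n + 1) := by
    intro n
    have hlt : m < m + 1 / (n + 1) := by
      have : (0:ℝ) < 1 / (n + 1) := by positivity
      linarith
    obtain ⟨_, ⟨y, hy, rfl⟩, hya⟩ := exists_lt_of_csInf_lt hSne hlt
    exact ⟨y, hy, hya⟩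
  choose u huC hu using hsel
  -- Cauchy sequence
  have hcauchy : CauchySeq u := by
    rw [Metric.cauchySeq_iff]
    intro ε hε
    have hε2q : 0 < (ε / 2) ^ q := Real.rpow_pos_of_pos (by linarith) q
    have htend : Filter.Tendsto (fun n : ℕ => (m + 1 / (n + 1)) ^ (q / p))
        Filter.atTop (nhds (m ^ (q / p))) := by
      have h1 : Filter.Tendsto (fun n : ℕ => m + 1 / (n + 1 : ℝ))
          Filter.atTop (nhds m) := by
        have : Filter.Tendsto (fun n : ℕ => 1 / ((n : ℝ) + 1)) Filter.atTop (nhds 0) :=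
          tendsto_one_div_add_atTop_nhds_zero_nat
        simpa using (tendsto_const_nhds (x := m)).add this
      exact h1.rpow_const (Or.inr hqp0.le)
    have hev : ∀ᶠ n : ℕ in Filter.atTop,
        (m + 1 / (n + 1)) ^ (q / p) < m ^ (q / p) + (ε / 2) ^ q :=
      htend.eventually (gt_mem_nhds (by linarith))
    obtain ⟨N, hN⟩ := hev.exists_forall_of_atTop
    refine ⟨N, fun a ha b hb => ?_⟩
    have hbound : ∀ k, N ≤ k → ‖u k‖ ^ p ≤ m + 1 / (N + 1) := by
      intro k hk
      have h1 : (1 : ℝ) / (k + 1) ≤ 1 / (N + 1) := by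
        apply one_div_le_one_div_of_le (by positivity)
        exact_mod_cast by omega
      linarith [hu k]
    have h1 := hbound a ha
    have h2 := hbound b hb
    have hkey := key (u a) (huC a) (u b) (huC b)
    have hbase : (0:ℝ) ≤ (1 / 2) * ‖u a‖ ^ p + (1 / 2) * ‖u b‖ ^ p := by positivity
    have h3 : ((1 / 2) * ‖u a‖ ^ p + (1 / 2) * ‖u b‖ ^ p) ^ (q / p)
        ≤ (m + 1 / (N + 1)) ^ (q / p) := by
      apply Real.rpow_le_rpow hbase _ hqp0.le
      linarith
    have h4 : ‖(2 : ℝ)⁻¹ • (u a - u b)‖ ^ q < (ε / 2) ^ q := by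
      have := hN N le_rfl
      linarith
    have h5 : ‖(2 : ℝ)⁻¹ • (u a - u b)‖ < ε / 2 := by
      by_contra h
      push_neg at h
      exact absurd h4 (not_lt.mpr (Real.rpow_le_rpow (by linarith) h hq0.le))
    have h6 : ‖(2 : ℝ)⁻¹ • (u a - u b)‖ = 2⁻¹ * ‖u a - u b‖ := by
      rw [norm_smul]; norm_num
    rw [dist_eq_norm]
    rw [h6] at h5
    linarith
  obtain ⟨x, hx⟩ := cauchySeq_tendsto_of_complete hcauchy
  have hxC : x ∈ C := hclosed.mem_of_tendsto hx (Filter.Eventually.of_forall huC)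
  have hxval : ‖x‖ ^ p = m := by
    have t1 : Filter.Tendsto (fun n => ‖u n‖ ^ p) Filter.atTop (nhds (‖x‖ ^ p)) :=
      (hx.norm).rpow_const (Or.inr hp0.le)
    have t2 : Filter.Tendsto (fun n => ‖u n‖ ^ p) Filter.atTop (nhds m) := by
      have hupper : Filter.Tendsto (fun n : ℕ => m + 1 / (n + 1 : ℝ))
          Filter.atTop (nhds m) := by
        have : Filter.Tendsto (fun n : ℕ => 1 / ((n : ℝ) + 1)) Filter.atTop (nhds 0) :=
          tendsto_one_div_add_atTop_nhds_zero_nat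
        simpa using (tendsto_const_nhds (x := m)).add this
      refine tendsto_of_tendsto_of_tendsto_of_le_of_le tendsto_const_nhds hupper
        (fun n => hmle _ (huC n)) (fun n => (hu n).le)
    exact tendsto_nhds_unique t1 t2
  refine ⟨x, ⟨hxC, hxval⟩, ?_⟩
  rintro y ⟨hyC, hyval⟩
  have hkey := key y hyC x hxC
  rw [hyval, hxval] at hkey
  have hsum : (1 / 2) * m + (1 / 2) * m = m := by ring
  rw [hsum] at hkey
  have h0 : ‖(2 : ℝ)⁻¹ • (y - x)‖ ^ q ≤ 0 := by linarith
  have : ‖(2 : ℝ)⁻¹ • (y - x)‖ = 0 := by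
    by_contra h
    have hpos : 0 < ‖(2 : ℝ)⁻¹ • (y - x)‖ := lt_of_le_of_ne (norm_nonneg _) (Ne.symm h)
    exact absurd h0 (not_le.mpr (Real.rpow_pos_of_pos hpos q))
  have : y - x = 0 := by
    simpa [norm_smul, sub_eq_zero] using this
  exact sub_eq_zero.mp this
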